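/- Let M be a loopless matroid of rank 2 on a finite ground set E with |E| ≥ 3, let f_0 = |E| and let f_1 be the number of 2-element independent subsets of M. If f_1 ≥ f_0, then (1, f_0 − 2, f_1 − f_0 + 1) is a pure O-sequence. (This is the statement that the h-vector of a 1-dimensional matroid complex is a pure O-sequence, in the nondegenerate case h_2 ≥ 1.) -/

import Mathlib

/-- The degree of a monomial, given by its exponent vector. -/
def monDeg {r : ℕ} (M : Fin r → ℕ) : ℕ := ∑ j, M j

/-- `X` is a (monomial) order ideal: a nonempty finite set of monomials (exponent vectors)
closed under divisibility. -/
def IsOrderIdeal {r : ℕ} (X : Finset (Fin r → ℕ)) : Prop :=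
  X.Nonempty ∧ ∀ M ∈ X, ∀ N : Fin r → ℕ, (∀ j, N j ≤ M j) → N ∈ X

/-- `M` is a maximal monomial of `X` with respect to divisibility. -/
def IsMaxMon {r : ℕ} (X : Finset (Fin r → ℕ)) (M : Fin r → ℕ) : Prop :=
  M ∈ X ∧ ∀ N ∈ X, (∀ j, M j ≤ N j) → N = M

/-- `X` is a pure order ideal with socle degree `e`: it is an order ideal whose maximal
degree is `e` and all of whose maximal monomials have degree `e`. -/
def IsPureWithSocle {r : ℕ} (X : Finset (Fin r → ℕ)) (e : ℕ) : Prop :=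
  IsOrderIdeal X ∧ (∀ M ∈ X, monDeg M ≤ e) ∧ (∃ M ∈ X, monDeg M = e) ∧
    ∀ M, IsMaxMon X M → monDeg M = e

/-- `h` agrees in degrees `≤ e` with the h-vector of `X`. -/
def HasHVector {r : ℕ} (X : Finset (Fin r → ℕ)) (h : ℕ → ℕ) (e : ℕ) : Prop :=
  ∀ i ≤ e, h i = (X.filter fun M => monDeg M = i).card

/-- `h` is (in degrees `≤ e`) a pure O-sequence of socle degree `e`. -/
def IsPureOSeq (h : ℕ → ℕ) (e : ℕ) : Prop :=
  ∃ (r : ℕ) (X : Finset (Fin r → ℕ)), IsPureWithSocle X e ∧ HasHVector X h e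

/-- `h` is a pure O-sequence of socle degree `e` and type `t`. -/
def IsPureOSeqOfType (h : ℕ → ℕ) (e t : ℕ) : Prop :=
  ∃ (r : ℕ) (X : Finset (Fin r → ℕ)), IsPureWithSocle X e ∧ HasHVector X h e ∧
    {M : Fin r → ℕ | IsMaxMon X M}.ncard = t

/-- `((n)_(d))_1^1`, computed from the `d`-binomial (Macaulay) expansion of `n`
obtained greedily; by convention `((0)_(d))_1^1 = 0`. -/
def macaulayBound : ℕ → ℕ → ℕ
  | 0, _ => 0
  | (n+1), d =>
      Nat.choose (Nat.findGreatest (fun k => Nat.choose k d ≤ n + 1) (n + 1 + d) + 1) (d + 1) +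
        macaulayBound
          ((n + 1) - Nat.choose (Nat.findGreatest (fun k => Nat.choose k d ≤ n + 1) (n + 1 + d)) d)
          (d - 1)
  termination_by n d => n
  decreasing_by
    have hd : d ≤ Nat.findGreatest (fun k => Nat.choose k d ≤ n + 1) (n + 1 + d) :=
      Nat.le_findGreatest (by omega) (by simp [Nat.choose_self])
    have hpos := Nat.choose_pos hd
    omega

/-- `g` satisfies Macaulay's bound (in degrees `1 ≤ i ≤ e - 1`). -/
def SatisfiesMacaulay (g : ℕ → ℕ) (e : ℕ) : Prop :=
  ∀ i, 1 ≤ i → i + 1 ≤ e → g (i + 1) ≤ macaulayBound (g i) i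

/-- `h` is an O-sequence of socle degree `e`. -/
def IsOSeq (h : ℕ → ℕ) (e : ℕ) : Prop :=
  h 0 = 1 ∧ (∀ i ≤ e, 0 < h i) ∧ SatisfiesMacaulay h e

/-- `h` is differentiable: its first difference `(1, h 1 - h 0, …, h e - h (e-1))`
consists of nonnegative integers and satisfies Macaulay's bound. -/
def IsDifferentiable (h : ℕ → ℕ) (e : ℕ) : Prop :=
  h 0 = 1 ∧ (∀ i, 1 ≤ i → i ≤ e → h (i - 1) ≤ h i) ∧
    SatisfiesMacaulay (fun i => if i = 0 then 1 else h i - h (i - 1)) e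

/-- The sequence `(1, a, b)` (padded by zeros). -/
def seq3 (a b : ℕ) : ℕ → ℕ := fun i => [1, a, b].getD i 0

section Construction
open Finset

def dmon (a : ℕ) (i : Fin a) : Fin a → ℕ := fun k => if k = i then 1 else 0

def cmon (a : ℕ) (i j : ℕ) : Fin a → ℕ :=
  fun k => (if (k : ℕ) = i then 1 else 0) + (if (k : ℕ) = j then 1 else 0)

lemma sum_ite_val {a i : ℕ} (hi : i < a) :
    (∑ k : Fin a, if (k : ℕ) = i then 1 else 0) = 1 := by
  rw [Finset.sum_eq_single ⟨i, hi⟩]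
  · simp
  · intro k _ hk
    simp only [ite_eq_right_iff]
    intro h; exact absurd (Fin.ext h) hk
  · simp

lemma monDeg_dmon {a : ℕ} (i : Fin a) : monDeg (dmon a i) = 1 := by
  classical
  simp [monDeg, dmon]

lemma monDeg_cmon {a i j : ℕ} (hi : i < a) (hj : j < a) : monDeg (cmon a i j) = 2 := by
  simp [monDeg, cmon, Finset.sum_add_distrib, sum_ite_val hi, sum_ite_val hj]

lemma cmon_inj {a i j i' j' : ℕ} (hij : i ≤ j) (hj : j < a) (hij' : i' ≤ j') (hj' : j' < a)
    (h : cmon a i j = cmon a i' j') : i = i' ∧ j = j' := by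
  have hi : i < a := lt_of_le_of_lt hij hj
  have hi' : i' < a := lt_of_le_of_lt hij' hj'
  have key : ∀ t, t < a → ((if t = i then 1 else 0) + (if t = j then 1 else 0) : ℕ)
      = (if t = i' then 1 else 0) + (if t = j' then 1 else 0) := fun t ht => congrFun h ⟨t, ht⟩
  have k1 := key i hi
  have k2 := key j hj
  have k3 := key i' hi'
  have k4 := key j' hj'
  have d1 : i = i' ∨ i = j' := by
    by_contra hc; push_neg at hc
    rw [if_neg hc.1, if_neg hc.2, if_pos rfl] at k1
    split_ifs at k1 <;> omega
  have d2 : j = i' ∨ j = j' := by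
    by_contra hc; push_neg at hc
    rw [if_neg hc.1, if_neg hc.2, if_pos rfl] at k2
    split_ifs at k2 <;> omega
  have d3 : i' = i ∨ i' = j := by
    by_contra hc; push_neg at hc
    rw [if_neg hc.1, if_neg hc.2, if_pos rfl] at k3
    split_ifs at k3 <;> omega
  have d4 : j' = i ∨ j' = j := by
    by_contra hc; push_neg at hc
    rw [if_neg hc.1, if_neg hc.2, if_pos rfl] at k4
    split_ifs at k4 <;> omega
  omega

end Construction
section C2
open Finset

lemma monDeg_le {a : ℕ} {N M : Fin a → ℕ} (h : ∀ j, N j ≤ M j) : monDeg N ≤ monDeg M :=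
  Finset.sum_le_sum fun j _ => h j

lemma monDeg_eq_of_le {a : ℕ} {N M : Fin a → ℕ} (h : ∀ j, N j ≤ M j)
    (hd : monDeg N = monDeg M) : N = M := by
  funext k
  by_contra hk
  have hlt : N k < M k := lt_of_le_of_ne (h k) hk
  have : monDeg N < monDeg M :=
    Finset.sum_lt_sum (fun j _ => h j) ⟨k, Finset.mem_univ k, hlt⟩
  omega

lemma monDeg_zero_iff {a : ℕ} {N : Fin a → ℕ} : monDeg N = 0 ↔ N = fun _ => 0 := by
  constructor
  · intro h
    funext k
    have := Finset.sum_eq_zero_iff.mp h k (Finset.mem_univ k)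
    simpa using this
  · rintro rfl; simp [monDeg]

lemma monDeg_one {a : ℕ} {N : Fin a → ℕ} (h : monDeg N = 1) : ∃ i, N = dmon a i := by
  have hex : ∃ i, N i ≠ 0 := by
    by_contra hc; push_neg at hc
    rw [monDeg_zero_iff.2 (funext hc)] at h; simp [monDeg] at h
  obtain ⟨i, hi⟩ := hex
  have hle : N i ≤ 1 := h ▸ Finset.single_le_sum (fun j _ => Nat.zero_le _) (Finset.mem_univ i)
  have hNi : N i = 1 := by omega
  refine ⟨i, funext fun k => ?_⟩
  rcases eq_or_ne k i with rfl | hk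
  · simp [dmon, hNi]
  · have hsplit : monDeg N = N i + ∑ j ∈ Finset.univ.erase i, N j :=
      (Finset.add_sum_erase _ _ (Finset.mem_univ i)).symm
    have : N k ≤ ∑ j ∈ Finset.univ.erase i, N j :=
      Finset.single_le_sum (fun j _ => Nat.zero_le _) (Finset.mem_erase.2 ⟨hk, Finset.mem_univ k⟩)
    simp [dmon, hk]
    omega

lemma construction {a b : ℕ} (ha : 1 ≤ a) (hb : 1 ≤ b)
    (hab : a ≤ 2 * b) (hba : 2 * b ≤ a * (a + 1)) :
    IsPureOSeq (seq3 a b) 2 := by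
  classical
  set P : Finset (Fin a × Fin a) :=
    Finset.univ.filter (fun p => (p.1 : ℕ) ≤ (p.2 : ℕ)) with hP
  set Q : Finset (Fin a × Fin a) :=
    Finset.univ.filter (fun p => (p.2 : ℕ) ≤ (p.1 : ℕ)) with hQ
  have hPQcard : Q.card = P.card := by
    apply Finset.card_bij (fun p _ => p.swap)
    · intro p hp; simp only [hP, hQ, Finset.mem_filter, Finset.mem_univ, true_and] at *
      exact hp
    · intro p _ q _ hpq
      exact Prod.ext (congrArg Prod.snd hpq) (congrArg Prod.fst hpq)
    · intro p hp
      refine ⟨p.swap, ?_, rfl⟩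
      simp only [hP, hQ, Finset.mem_filter, Finset.mem_univ, true_and] at *
      exact hp
  have hunion : P ∪ Q = Finset.univ := by
    ext p; simp only [hP, hQ, Finset.mem_union, Finset.mem_filter, Finset.mem_univ, true_and,
      iff_true]
    exact Nat.le_total _ _
  have hinter : P ∩ Q = Finset.univ.filter (fun p => p.1 = p.2) := by
    ext p
    simp only [hP, hQ, Finset.mem_inter, Finset.mem_filter, Finset.mem_univ, true_and]
    constructor
    · rintro ⟨h1, h2⟩; exact Fin.ext (le_antisymm h1 h2)
    · rintro h; rw [h]; exact ⟨le_refl _, le_refl _⟩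
  have hdiag : (Finset.univ.filter (fun p : Fin a × Fin a => p.1 = p.2)).card = a := by
    rw [show Finset.univ.filter (fun p : Fin a × Fin a => p.1 = p.2)
        = Finset.univ.image (fun i : Fin a => (i, i)) by
      ext p
      simp only [Finset.mem_filter, Finset.mem_univ, true_and, Finset.mem_image]
      constructor
      · intro h; exact ⟨p.1, Prod.ext rfl h⟩
      · rintro ⟨i, rfl⟩; rfl]
    rw [Finset.card_image_of_injective _ (fun i j h => (Prod.mk.injEq _ _ _ _ ▸ h).1)]
    simp
  have hPcard : 2 * P.card = a * a + a := by
    have := Finset.card_union_add_card_inter P Q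
    rw [hunion, hinter, hdiag, hPQcard] at this
    simp only [Finset.card_univ, Fintype.card_prod, Fintype.card_fin] at this
    omega
  set Deg2 : Finset (Fin a → ℕ) := P.image (fun p => cmon a p.1 p.2) with hDeg2
  have hD2card : Deg2.card = P.card := by
    apply Finset.card_image_of_injOn
    intro p hp q hq hpq
    simp only [hP, Finset.mem_coe, Finset.mem_filter, Finset.mem_univ, true_and] at hp hq
    obtain ⟨h1, h2⟩ := cmon_inj hp p.2.isLt hq q.2.isLt hpq
    exact Prod.ext (Fin.ext h1) (Fin.ext h2)
  set pm : ℕ → (Fin a → ℕ) :=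
    (fun t => cmon a (2*t) (if 2*t+1 < a then 2*t+1 else 2*t)) with hpm
  set Mset : Finset (Fin a → ℕ) := (Finset.range ((a+1)/2)).image pm with hMset
  have hMD : Mset ⊆ Deg2 := by
    intro m hm
    simp only [hMset, Finset.mem_image, Finset.mem_range] at hm
    obtain ⟨t, ht, rfl⟩ := hm
    have h2t : 2*t < a := by omega
    have hj : (if 2*t+1 < a then 2*t+1 else 2*t) < a ∧ 2*t ≤ (if 2*t+1 < a then 2*t+1 else 2*t) := by
      split_ifs <;> omega
    simp only [hDeg2, Finset.mem_image]
    refine ⟨(⟨2*t, h2t⟩, ⟨_, hj.1⟩), ?_, rfl⟩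
    simp only [hP, Finset.mem_filter, Finset.mem_univ, true_and]
    exact hj.2
  have hmul : a * (a + 1) = a * a + a := by ring
  have hMcard : Mset.card ≤ b := by
    have h1 : Mset.card ≤ (Finset.range ((a+1)/2)).card := Finset.card_image_le
    rw [Finset.card_range] at h1
    omega
  have hbD : b ≤ Deg2.card := by omega
  obtain ⟨T, hMT, hTD, hTcard⟩ := Finset.exists_subsuperset_card_eq hMD hMcard hbD
  have hT2 : ∀ m ∈ T, monDeg m = 2 := by
    intro m hm
    obtain ⟨p, hp, rfl⟩ := Finset.mem_image.mp (hTD hm)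
    exact monDeg_cmon p.1.isLt p.2.isLt
  have hTne : T.Nonempty := Finset.card_pos.mp (by omega)
  -- the order ideal
  set X : Finset (Fin a → ℕ) :=
    insert (fun _ => 0) ((Finset.univ.image (dmon a)) ∪ T) with hX
  have hmemX : ∀ M : Fin a → ℕ,
      M ∈ X ↔ M = (fun _ => 0) ∨ (∃ i, M = dmon a i) ∨ M ∈ T := by
    intro M
    simp only [hX, Finset.mem_insert, Finset.mem_union, Finset.mem_image, Finset.mem_univ,
      true_and, eq_comm (a := M)]
  have hdegX : ∀ M ∈ X, monDeg M ≤ 2 := by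
    intro M hM
    rcases (hmemX M).1 hM with rfl | ⟨i, rfl⟩ | hMT'
    · simp [monDeg]
    · simp [monDeg_dmon]
    · exact le_of_eq (hT2 M hMT')
  have hdXmem : ∀ i : Fin a, dmon a i ∈ X := fun i => (hmemX _).2 (Or.inr (Or.inl ⟨i, rfl⟩))
  have h0mem : (fun _ : Fin a => 0) ∈ X := (hmemX _).2 (Or.inl rfl)
  have hTX : ∀ m ∈ T, m ∈ X := fun m hm => (hmemX _).2 (Or.inr (Or.inr hm))
  -- covering
  have hcover : ∀ i : Fin a, ∃ m ∈ T, 1 ≤ m i ∧ monDeg m = 2 := by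
    intro i
    have hia := i.isLt
    refine ⟨pm ((i : ℕ)/2), hMT ?_, ?_, hT2 _ (hMT ?_)⟩
    · exact Finset.mem_image.mpr ⟨(i:ℕ)/2, Finset.mem_range.mpr (by omega), rfl⟩
    · simp only [hpm, cmon]
      split_ifs <;> omega
    · exact Finset.mem_image.mpr ⟨(i:ℕ)/2, Finset.mem_range.mpr (by omega), rfl⟩
  refine ⟨a, X, ⟨⟨⟨_, h0mem⟩, ?_⟩, hdegX, ⟨_, hTX _ hTne.choose_spec, hT2 _ hTne.choose_spec⟩, ?_⟩, ?_⟩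
  · -- downward closed
    intro M hM N hN
    have hdN : monDeg N ≤ 2 := le_trans (monDeg_le hN) (hdegX M hM)
    interval_cases h : monDeg N
    · exact (hmemX N).2 (Or.inl (monDeg_zero_iff.1 h))
    · obtain ⟨i, rfl⟩ := monDeg_one h
      exact hdXmem i
    · have hM2 : monDeg M = 2 := le_antisymm (hdegX M hM) (h ▸ monDeg_le hN)
      have : N = M := monDeg_eq_of_le hN (by omega)
      exact this ▸ hM
  · -- purity
    rintro M ⟨hMX, hmax⟩
    rcases (hmemX M).1 hMX with rfl | ⟨i, rfl⟩ | hMT'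
    · obtain ⟨m, hm⟩ := hTne
      have := hmax m (hTX m hm) (fun j => Nat.zero_le _)
      rw [this] at hm
      exact absurd (hT2 _ hm) (by simp [monDeg])
    · obtain ⟨m, hmT, hm1, hm2⟩ := hcover i
      have hle : ∀ j, dmon a i j ≤ m j := by
        intro j
        rcases eq_or_ne j i with rfl | hj
        · simpa [dmon] using hm1
        · simp [dmon, hj]
      have := hmax m (hTX m hmT) hle
      rw [this] at hm2
      rw [monDeg_dmon] at hm2
      omega
    · exact hT2 M hMT'
  · -- h-vector
    have hf0 : X.filter (fun M => monDeg M = 0) = {fun _ => 0} := by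
      ext M
      simp only [Finset.mem_filter, Finset.mem_singleton]
      constructor
      · rintro ⟨_, h⟩; exact monDeg_zero_iff.1 h
      · rintro rfl; exact ⟨h0mem, by simp [monDeg]⟩
    have hf1 : X.filter (fun M => monDeg M = 1) = Finset.univ.image (dmon a) := by
      ext M
      simp only [Finset.mem_filter, Finset.mem_image, Finset.mem_univ, true_and]
      constructor
      · rintro ⟨_, h⟩
        obtain ⟨i, rfl⟩ := monDeg_one h
        exact ⟨i, rfl⟩
      · rintro ⟨i, rfl⟩
        exact ⟨hdXmem i, monDeg_dmon i⟩
    have hf2 : X.filter (fun M => monDeg M = 2) = T := by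
      ext M
      simp only [Finset.mem_filter]
      constructor
      · rintro ⟨hMX, h⟩
        rcases (hmemX M).1 hMX with rfl | ⟨i, rfl⟩ | hMT'
        · simp [monDeg] at h
        · rw [monDeg_dmon] at h; omega
        · exact hMT'
      · intro hMT'
        exact ⟨hTX _ hMT', hT2 _ hMT'⟩
    have hdinj : Function.Injective (dmon a) := by
      intro i j hij
      by_contra hne
      have h2 := congrFun hij i
      have e1 : dmon a i i = 1 := by simp [dmon]
      have e2 : dmon a j i = 0 := by simp [dmon, hne]
      rw [e1, e2] at h2
      exact one_ne_zero h2
    intro i hi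
    interval_cases i
    · simp [seq3, hf0]
    · rw [hf1, Finset.card_image_of_injective _ hdinj]
      simp [seq3]
    · rw [hf2, hTcard]
      simp [seq3]

end C2

section MatroidPart
open Finset

variable {α : Type*}

open scoped Classical

/-- The parallel class of `x`. -/
noncomputable def pclass (M : Matroid α) (E : Finset α) (x : α) : Finset α :=
  insert x (E.filter fun y => ¬ M.Indep {x, y})

lemma mem_pclass_iff {M : Matroid α} {E : Finset α} {x y : α} :
    y ∈ pclass M E x ↔ y = x ∨ (y ∈ E ∧ ¬ M.Indep {x, y}) := by
  simp [pclass]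

lemma pclass_subset {M : Matroid α} {E : Finset α} {x : α} (hx : x ∈ E) :
    pclass M E x ⊆ E := by
  intro y hy
  rcases mem_pclass_iff.1 hy with rfl | ⟨hyE, _⟩
  · exact hx
  · exact hyE

lemma self_mem_pclass {M : Matroid α} {E : Finset α} (x : α) : x ∈ pclass M E x :=
  mem_pclass_iff.2 (Or.inl rfl)

lemma pclass_dep {M : Matroid α} {E : Finset α} (hE : (E : Set α) = M.E)
    (hloop : ∀ x ∈ M.E, M.Indep {x}) {x y z : α} (hx : x ∈ E)
    (hy : y ∈ pclass M E x) (hz : z ∈ pclass M E x) (hyz : y ≠ z) : ¬ M.Indep {y, z} := by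
  intro hI
  have hx1 : M.Indep {x} := hloop x (hE ▸ Finset.mem_coe.2 hx)
  have hlt : ({x} : Set α).encard < ({y, z} : Set α).encard := by
    rw [Set.encard_singleton, Set.encard_pair hyz]
    exact_mod_cast one_lt_two
  obtain ⟨w, hw, hwI⟩ := hx1.augment hI hlt
  obtain ⟨hwyz, hwx⟩ := hw
  have hwx' : w ≠ x := by simpa using hwx
  have hIxw : M.Indep {x, w} := by
    rw [Set.pair_comm]
    exact hwI
  have hwmem : w ∈ pclass M E x := by
    rcases (by simpa using hwyz : w = y ∨ w = z) with rfl | rfl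
    · exact hy
    · exact hz
  rcases mem_pclass_iff.1 hwmem with rfl | ⟨_, hdep⟩
  · exact hwx' rfl
  · exact hdep hIxw

lemma mem_pclass_symm {M : Matroid α} {E : Finset α} {x y : α} (hx : x ∈ E)
    (hy : y ∈ pclass M E x) : x ∈ pclass M E y := by
  rcases mem_pclass_iff.1 hy with h | ⟨hyE, hdep⟩
  · rw [h]; exact self_mem_pclass _
  · exact mem_pclass_iff.2 (Or.inr ⟨hx, by rwa [Set.pair_comm]⟩)

lemma pclass_eq {M : Matroid α} {E : Finset α} (hE : (E : Set α) = M.E)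
    (hloop : ∀ x ∈ M.E, M.Indep {x}) {x y : α} (hx : x ∈ E)
    (hy : y ∈ pclass M E x) : pclass M E y = pclass M E x := by
  have hyE : y ∈ E := pclass_subset hx hy
  ext z
  constructor
  · intro hz
    rcases eq_or_ne z x with rfl | hzx
    · exact self_mem_pclass z
    · refine mem_pclass_iff.2 (Or.inr ⟨pclass_subset hyE hz, ?_⟩)
      exact pclass_dep hE hloop hyE (mem_pclass_symm hx hy) hz (Ne.symm hzx)
  · intro hz
    rcases eq_or_ne z y with rfl | hzy
    · exact self_mem_pclass z
    · refine mem_pclass_iff.2 (Or.inr ⟨pclass_subset hx hz, ?_⟩)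
      exact pclass_dep hE hloop hx hy hz (Ne.symm hzy)

end MatroidPart
section Counting
open Finset
open scoped Classical

variable {α : Type*}

lemma matroid_ineqs (M : Matroid α) (E : Finset α) (hE : (E : Set α) = M.E)
    (hloop : ∀ x ∈ M.E, M.Indep {x}) (hn3 : 3 ≤ E.card) (f₁ : ℕ)
    (hf₁ : f₁ = ((E.powersetCard 2).filter fun s : Finset α => M.Indep (↑s : Set α)).card)
    (hf : E.card ≤ f₁) :
    E.card - 2 ≤ 2 * (f₁ - E.card + 1) ∧
      2 * (f₁ - E.card + 1) ≤ (E.card - 2) * (E.card - 2 + 1) := by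
  set n := E.card with hn
  set dg : α → ℕ := fun x => (E.filter fun y => y ≠ x ∧ M.Indep {x, y}).card with hdg
  set F₁ : Finset (Finset α) := (E.powersetCard 2).filter (fun s : Finset α => M.Indep (↑s : Set α))
    with hF₁
  set D : Finset (α × α) := (E ×ˢ E).filter (fun p => p.1 ≠ p.2 ∧ M.Indep {p.1, p.2}) with hD
  have hDmem : ∀ p : α × α, p ∈ D ↔ p.1 ∈ E ∧ p.2 ∈ E ∧ p.1 ≠ p.2 ∧ M.Indep {p.1, p.2} := by
    intro p
    simp only [hD, mem_filter, mem_product]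
    tauto
  -- D.card = ∑ deg
  have hD1 : D.card = ∑ x ∈ E, dg x := by
    refine Finset.card_eq_sum_card_fiberwise (f := Prod.fst) (fun p hp => ((hDmem p).1 hp).1)
      |>.trans (Finset.sum_congr rfl fun x hx => ?_)
    apply Finset.card_bij (fun p _ => p.2)
    · intro p hp
      rw [mem_filter] at hp
      obtain ⟨hpD, hpx⟩ := hp
      obtain ⟨h1, h2, h3, h4⟩ := (hDmem p).1 hpD
      rw [mem_filter]
      exact ⟨h2, by rw [← hpx]; exact Ne.symm h3, by rwa [← hpx]⟩
    · intro p hp q hq hpq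
      rw [mem_filter] at hp hq
      exact Prod.ext (hp.2.trans hq.2.symm) hpq
    · intro y hy
      rw [mem_filter] at hy
      obtain ⟨hyE, hyx, hyI⟩ := hy
      exact ⟨(x, y), mem_filter.2 ⟨(hDmem _).2 ⟨hx, hyE, Ne.symm hyx, hyI⟩, rfl⟩, rfl⟩
  -- D.card = 2 * F₁.card
  have hD2 : D.card = 2 * F₁.card := by
    have hmapsto : ∀ p ∈ D, ({p.1, p.2} : Finset α) ∈ F₁ := by
      intro p hp
      obtain ⟨h1, h2, h3, h4⟩ := (hDmem p).1 hp
      rw [hF₁, mem_filter, mem_powersetCard]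
      refine ⟨⟨?_, Finset.card_pair h3⟩, by simpa using h4⟩
      intro z hz
      rcases Finset.mem_insert.1 hz with rfl | hz
      · exact h1
      · rw [Finset.mem_singleton.1 hz]; exact h2
    rw [Finset.card_eq_sum_card_fiberwise hmapsto]
    rw [Finset.sum_const_nat (m := 2) ?_, mul_comm]
    intro t ht
    rw [hF₁, mem_filter, mem_powersetCard] at ht
    obtain ⟨⟨htE, htc⟩, htI⟩ := ht
    obtain ⟨x, y, hxy, rfl⟩ := Finset.card_eq_two.1 htc
    have hxE : x ∈ E := htE (by simp)
    have hyE : y ∈ E := htE (by simp)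
    have hIxy : M.Indep {x, y} := by simpa using htI
    have : (D.filter fun p => ({p.1, p.2} : Finset α) = {x, y}) = {(x, y), (y, x)} := by
      ext p
      rw [mem_filter]
      constructor
      · rintro ⟨hpD, hpt⟩
        obtain ⟨h1, h2, h3, h4⟩ := (hDmem p).1 hpD
        have hp1 : p.1 = x ∨ p.1 = y := by
          have : p.1 ∈ ({x, y} : Finset α) := hpt ▸ Finset.mem_insert_self _ _
          simpa using this
        have hp2 : p.2 = x ∨ p.2 = y := by
          have : p.2 ∈ ({x, y} : Finset α) := hpt ▸ (Finset.mem_insert.2 (Or.inr (by simp)))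
          simpa using this
        simp only [Finset.mem_insert, Finset.mem_singleton]
        rcases hp1 with h | h <;> rcases hp2 with h' | h'
        · exact absurd (h.trans h'.symm) h3
        · exact Or.inl (Prod.ext h h')
        · exact Or.inr (Prod.ext h h')
        · exact absurd (h.trans h'.symm) h3
      · intro hp
        simp only [Finset.mem_insert, Finset.mem_singleton] at hp
        rcases hp with rfl | rfl
        · exact ⟨(hDmem _).2 ⟨hxE, hyE, hxy, hIxy⟩, rfl⟩
        · refine ⟨(hDmem _).2 ⟨hyE, hxE, Ne.symm hxy, by rwa [Set.pair_comm]⟩, ?_⟩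
          simp [Finset.pair_comm]
    rw [this, Finset.card_pair (by simp [Prod.ext_iff]; intro h; exact absurd h hxy)]
  -- upper bound
  have hub : D.card ≤ n * n - n := by
    have hsub : D ⊆ E.offDiag := by
      intro p hp
      obtain ⟨h1, h2, h3, _⟩ := (hDmem p).1 hp
      exact Finset.mem_offDiag.2 ⟨h1, h2, h3⟩
    have := Finset.card_le_card hsub
    rwa [Finset.offDiag_card] at this
  -- max parallel class
  have hEne : E.Nonempty := Finset.card_pos.1 (by omega)
  obtain ⟨x₀, hx₀, hmax⟩ := E.exists_max_image (fun x => (pclass M E x).card) hEne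
  set C : Finset α := pclass M E x₀ with hC
  set s : ℕ := C.card with hs
  have hCE : C ⊆ E := pclass_subset hx₀
  have hs1 : 1 ≤ s := Finset.card_pos.2 ⟨x₀, self_mem_pclass x₀⟩
  have hsn : s ≤ n := Finset.card_le_card hCE
  have hdg_eq : ∀ x ∈ E, dg x = n - (pclass M E x).card := by
    intro x hx
    have hfil : E.filter (fun y => y ≠ x ∧ M.Indep {x, y}) = E \ pclass M E x := by
      ext y
      simp only [mem_filter, Finset.mem_sdiff, mem_pclass_iff]
      constructor
      · rintro ⟨hyE, hyx, hyI⟩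
        exact ⟨hyE, by push_neg; exact ⟨hyx, fun _ => hyI⟩⟩
      · rintro ⟨hyE, hy⟩
        push_neg at hy
        obtain ⟨h1, h2⟩ := hy
        exact ⟨hyE, h1, h2 hyE⟩
    rw [hdg]
    simp only
    rw [hfil, Finset.card_sdiff_of_subset (pclass_subset hx)]
  have hdegC : ∀ x ∈ C, dg x = n - s := by
    intro x hx
    rw [hdg_eq x (hCE hx), pclass_eq hE hloop hx₀ hx]
  have hout : ∀ x ∈ E \ C, (pclass M E x).card ≤ n - s ∧ (pclass M E x).card ≤ s := by
    intro x hx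
    obtain ⟨hxE, hxC⟩ := Finset.mem_sdiff.1 hx
    constructor
    · have hsub : pclass M E x ⊆ E \ C := by
        intro z hz
        refine Finset.mem_sdiff.2 ⟨pclass_subset hxE hz, fun hzC => ?_⟩
        have h1 : pclass M E z = C := pclass_eq hE hloop hx₀ hzC
        have h2 : pclass M E z = pclass M E x := pclass_eq hE hloop hxE hz
        exact hxC (h1 ▸ h2 ▸ self_mem_pclass x)
      have := Finset.card_le_card hsub
      rwa [Finset.card_sdiff_of_subset hCE] at this
    · exact hmax x hxE
  -- case s = n: contradiction
  rcases eq_or_ne s n with hsN | hsN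
  · exfalso
    have hCeq : C = E := Finset.eq_of_subset_of_card_le hCE (by omega)
    have hF₁empty : F₁ = ∅ := by
      rw [Finset.eq_empty_iff_forall_notMem]
      intro t ht
      rw [hF₁, mem_filter, mem_powersetCard] at ht
      obtain ⟨⟨htE, htc⟩, htI⟩ := ht
      obtain ⟨x, y, hxy, rfl⟩ := Finset.card_eq_two.1 htc
      have hxC : x ∈ C := hCeq ▸ htE (by simp)
      have hyC : y ∈ C := hCeq ▸ htE (by simp)
      exact pclass_dep hE hloop hx₀ hxC hyC hxy (by simpa using htI)
    rw [hF₁empty] at hf₁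
    simp at hf₁
    omega
  rcases eq_or_ne s (n - 1) with hsN1 | hsN1
  · -- case s = n - 1 : contradiction with f₁ ≥ n
    exfalso
    have hcard1 : (E \ C).card = 1 := by rw [Finset.card_sdiff_of_subset hCE]; omega
    obtain ⟨y₀, hy₀⟩ := Finset.card_eq_one.1 hcard1
    have hy₀E : y₀ ∈ E := (Finset.mem_sdiff.1 (hy₀ ▸ Finset.mem_singleton_self y₀)).1
    have hmemC : ∀ z ∈ E, z ≠ y₀ → z ∈ C := by
      intro z hz hzy
      by_contra hzC
      have : z ∈ E \ C := Finset.mem_sdiff.2 ⟨hz, hzC⟩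
      rw [hy₀] at this
      exact hzy (Finset.mem_singleton.1 this)
    have hkey : ∀ t ∈ F₁, y₀ ∈ t := by
      intro t ht
      rw [hF₁, mem_filter, mem_powersetCard] at ht
      obtain ⟨⟨htE, htc⟩, htI⟩ := ht
      obtain ⟨x, y, hxy, rfl⟩ := Finset.card_eq_two.1 htc
      by_contra hyt
      have hxE : x ∈ E := htE (by simp)
      have hyE : y ∈ E := htE (by simp)
      have hxC : x ∈ C := hmemC x hxE (fun h => hyt (h ▸ by simp))
      have hyC : y ∈ C := hmemC y hyE (fun h => hyt (h ▸ by simp))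
      exact pclass_dep hE hloop hx₀ hxC hyC hxy (by simpa using htI)
    have hbound : F₁.card ≤ ((E.erase y₀).powersetCard 1).card := by
      apply Finset.card_le_card_of_injOn (fun t => t.erase y₀)
      · intro t ht
        have ht' := ht
        rw [hF₁, Finset.mem_coe, mem_filter, mem_powersetCard] at ht'
        rw [Finset.mem_coe, mem_powersetCard]
        exact ⟨Finset.erase_subset_erase _ ht'.1.1,
          by rw [Finset.card_erase_of_mem (hkey t ht), ht'.1.2]⟩
      · intro t1 h1 t2 h2 h12
        rw [← Finset.insert_erase (hkey t1 (Finset.mem_coe.1 h1)),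
          ← Finset.insert_erase (hkey t2 (Finset.mem_coe.1 h2))]
        exact congrArg (insert y₀) h12
    rw [Finset.card_powersetCard, Finset.card_erase_of_mem hy₀E, Nat.choose_one_right] at hbound
    omega
  -- main case : s ≤ n - 2
  have hsn2 : s ≤ n - 2 := by omega
  have hsplit : ∑ x ∈ E \ C, dg x + ∑ x ∈ C, dg x = ∑ x ∈ E, dg x := Finset.sum_sdiff hCE
  have hsumC : ∑ x ∈ C, dg x = s * (n - s) := Finset.sum_const_nat hdegC
  have hcardEC : (E \ C).card = n - s := by rw [Finset.card_sdiff_of_subset hCE]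
  have h2f : 2 * f₁ = ∑ x ∈ E, dg x := by rw [hf₁, ← hD2, hD1]
  -- upper bound part (common)
  obtain ⟨k, hk⟩ : ∃ k, n = k + 3 := ⟨n - 3, by omega⟩
  have e1 : n * n = k * k + 6 * k + 9 := by rw [hk]; ring
  have e2 : (n - 2) * (n - 2 + 1) = (k + 1) * (k + 2) := by
    rw [hk, show k + 3 - 2 = k + 1 by omega]
  have e3 : (k + 1) * (k + 2) = k * k + 3 * k + 2 := by ring
  refine ⟨?_, by omega⟩
  -- lower bound
  rcases eq_or_ne s 1 with hs1' | hs2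
  · -- all classes singletons
    have hlow : ∀ x ∈ E \ C, n - s ≤ dg x := by
      intro x hx
      rw [hdg_eq x (Finset.mem_sdiff.1 hx).1]
      have := (hout x hx).2
      omega
    have hB : (E \ C).card * (n - s) ≤ ∑ x ∈ E \ C, dg x := by
      have := Finset.card_nsmul_le_sum (E \ C) dg (n - s) hlow
      rwa [smul_eq_mul] at this
    have hL2 : 2 * (n - s) ≤ (n - s) * (n - s) := Nat.mul_le_mul_right (n - s) (by omega)
    have hBC : (E \ C).card * (n - s) = (n - s) * (n - s) := by rw [hcardEC]
    have hout' : (n - s) * (n - s) ≤ ∑ x ∈ E \ C, dg x := hBC ▸ hB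
    have hC' : ∑ x ∈ C, dg x = n - s := by rw [hsumC, hs1', one_mul]
    omega
  · -- s ≥ 2
    have hlow : ∀ x ∈ E \ C, s ≤ dg x := by
      intro x hx
      rw [hdg_eq x (Finset.mem_sdiff.1 hx).1]
      have := (hout x hx).1
      omega
    have hB : (E \ C).card * s ≤ ∑ x ∈ E \ C, dg x := by
      have := Finset.card_nsmul_le_sum (E \ C) dg s hlow
      rwa [smul_eq_mul] at this
    obtain ⟨s', hs'⟩ : ∃ s', s = s' + 2 := ⟨s - 2, by omega⟩
    obtain ⟨m', hm'⟩ : ∃ m', n - s = m' + 2 := ⟨n - s - 2, by omega⟩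
    have e5 : s * (n - s) = s' * m' + 2 * s' + 2 * m' + 4 := by rw [hm', hs']; ring
    have e6 : (n - s) * s = s' * m' + 2 * s' + 2 * m' + 4 := by rw [hm', hs']; ring
    have hBC2 : (E \ C).card * s = (n - s) * s := by rw [hcardEC]
    have hout' : (n - s) * s ≤ ∑ x ∈ E \ C, dg x := hBC2 ▸ hB
    omega

end Counting

/-- (Stanley's conjecture for rank-2 matroids.) Let `M` be a loopless
matroid of rank 2 on a finite ground set with at least 3 elements, with `f₀` elements
and `f₁` two-element independent sets.  If `f₁ ≥ f₀`, then `(1, f₀ − 2, f₁ − f₀ + 1)`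
is a pure O-sequence. -/
theorem matroid_rank_two_hvector_is_pure {α : Type*} (M : Matroid α)
    (hfin : M.E.Finite) (hcard : 3 ≤ M.E.ncard)
    (hloopless : ∀ x ∈ M.E, M.Indep {x})
    (hrank : ∀ B : Set α, M.IsBase B → B.ncard = 2)
    (f₀ f₁ : ℕ) (hf₀ : f₀ = M.E.ncard)
    (hf₁ : f₁ = {S : Set α | M.Indep S ∧ S.ncard = 2}.ncard)
    (hf : f₀ ≤ f₁) :
    IsPureOSeq (seq3 (f₀ - 2) (f₁ - f₀ + 1)) 2 := by
  classical
  set E : Finset α := hfin.toFinset with hEdef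
  have hEcoe : (E : Set α) = M.E := hfin.coe_toFinset
  have hEcard : E.card = M.E.ncard := by rw [← hEcoe, Set.ncard_coe_finset]
  have hn3 : 3 ≤ E.card := by omega
  set F₁ : Finset (Finset α) :=
    (E.powersetCard 2).filter (fun s : Finset α => M.Indep (↑s : Set α)) with hF₁def
  have hf₁' : f₁ = F₁.card := by
    rw [hf₁]
    have himg : {S : Set α | M.Indep S ∧ S.ncard = 2}
        = (fun (t : Finset α) => (t : Set α)) '' ↑F₁ := by
      ext S
      simp only [Set.mem_setOf_eq, Set.mem_image, Finset.mem_coe, hF₁def, Finset.mem_filter,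
        Finset.mem_powersetCard]
      constructor
      · rintro ⟨hI, hc⟩
        have hfin' : S.Finite := Set.finite_of_ncard_ne_zero (by omega)
        refine ⟨hfin'.toFinset, ⟨⟨?_, ?_⟩, ?_⟩, hfin'.coe_toFinset⟩
        · intro x hx
          rw [Set.Finite.mem_toFinset] at hx
          rw [hEdef, Set.Finite.mem_toFinset]
          exact hI.subset_ground hx
        · rw [← Set.ncard_eq_toFinset_card S hfin']
          exact hc
        · rw [hfin'.coe_toFinset]
          exact hI
      · rintro ⟨t, ⟨⟨htE, htc⟩, htI⟩, rfl⟩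
        exact ⟨htI, by rw [Set.ncard_coe_finset]; exact htc⟩
    rw [himg, Set.ncard_image_of_injective _ Finset.coe_injective, Set.ncard_coe_finset]
  have hf0E : f₀ = E.card := by omega
  obtain ⟨h1, h2⟩ := matroid_ineqs M E hEcoe hloopless hn3 f₁ (hF₁def ▸ hf₁') (by omega)
  rw [← hf0E] at h1 h2
  exact construction (by omega) (by omega) h1 h2
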